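/- Let k > 0, ω = k², E0 ∈ ℝ, γ > 0, λ ∈ ℝ, J > 0, and μ = λJ². Then the map (B, Z) ↦ |Z/J|² is a bijection from the set of solutions (B, Z) ∈ ℂ² of the harmonic scattering system {(2ik − k²)B + γZ = 2ikJ, γB + (E0 − k²)Z + λ|Z|²Z = 0} onto the set of real numbers R satisfying the response equation R·(μR + γ²/(ω+4) − (ω − E0))² + (4γ⁴/(ω(ω+4)²))·R − 4γ²/(ω+4) = 0. -/

import Mathlib

/-- The set of harmonic scattering solutions `(B, Z)` of the algebraic system
`(2ik - k²)B + γZ = 2ikJ`, `γB + (E0 - k²)Z + λ|Z|²Z = 0`. -/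
def ScatteringSolutions (k E0 γ lam J : ℝ) : Set (ℂ × ℂ) :=
  {bz : ℂ × ℂ |
    (2 * Complex.I * (k : ℂ) - (k : ℂ)^2) * bz.1 + (γ : ℂ) * bz.2 =
      2 * Complex.I * (k : ℂ) * (J : ℂ) ∧
    (γ : ℂ) * bz.1 + ((E0 : ℂ) - (k : ℂ)^2) * bz.2 +
      (lam : ℂ) * ((‖bz.2‖ : ℂ))^2 * bz.2 = 0}

/-- The set of real solutions of the response equation. -/
def ResponseSolutions (ω E0 γ μ : ℝ) : Set ℝ :=
  {R : ℝ | R * (μ * R + γ^2 / (ω + 4) - (ω - E0))^2 +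
      (4 * γ^4 / (ω * (ω + 4)^2)) * R - 4 * γ^2 / (ω + 4) = 0}

private lemma resp_iff (ω E0 γ μ R : ℝ) (hω : 0 < ω) :
    (R * (μ * R + γ^2 / (ω + 4) - (ω - E0))^2 +
      (4 * γ^4 / (ω * (ω + 4)^2)) * R - 4 * γ^2 / (ω + 4) = 0) ↔
    R * (((μ * R - (ω - E0)) * ω + γ^2)^2 + 4 * ω * (μ * R - (ω - E0))^2)
      = 4 * ω * γ^2 := by
  have h4 : (0:ℝ) < ω + 4 := by linarith
  have key : R * (μ * R + γ^2 / (ω + 4) - (ω - E0))^2 +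
      (4 * γ^4 / (ω * (ω + 4)^2)) * R - 4 * γ^2 / (ω + 4)
      = (R * (((μ * R - (ω - E0)) * ω + γ^2)^2 + 4 * ω * (μ * R - (ω - E0))^2)
          - 4 * ω * γ^2) / (ω * (ω + 4)) := by
    field_simp
    ring
  rw [key, div_eq_zero_iff, sub_eq_zero]
  have hne : ω * (ω + 4) ≠ 0 := by positivity
  tauto

private lemma mem_scatter_iff (k E0 γ lam J : ℝ) (hk : 0 < k) (bz : ℂ × ℂ) :
    bz ∈ ScatteringSolutions k E0 γ lam J ↔
      (bz.2 * (((E0 - k^2 + lam * ‖bz.2‖^2 : ℝ) : ℂ) *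
          (2 * Complex.I * (k : ℂ) - (k : ℂ)^2) - (γ : ℂ)^2)
        = -(2 * Complex.I * (k : ℂ) * (γ : ℂ) * (J : ℂ)) ∧
      (2 * Complex.I * (k : ℂ) - (k : ℂ)^2) * bz.1 =
        2 * Complex.I * (k : ℂ) * (J : ℂ) - (γ : ℂ) * bz.2) := by
  have hc : (2 * Complex.I * (k : ℂ) - (k : ℂ)^2) ≠ 0 := by
    intro h
    have him := congrArg Complex.im h
    simp [← Complex.ofReal_pow] at him
    exact hk.ne' him
  constructor
  · rintro ⟨h1, h2⟩
    refine ⟨?_, by linear_combination h1⟩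
    linear_combination (norm := (push_cast; ring1))
      (2 * Complex.I * (k : ℂ) - (k : ℂ)^2) * h2 - (γ : ℂ) * h1
  · rintro ⟨hZ, hB⟩
    refine ⟨by linear_combination hB, ?_⟩
    have h : (2 * Complex.I * (k : ℂ) - (k : ℂ)^2) *
        ((γ : ℂ) * bz.1 + ((E0 : ℂ) - (k : ℂ)^2) * bz.2 +
          (lam : ℂ) * ((‖bz.2‖ : ℂ))^2 * bz.2) = 0 := by
      linear_combination (norm := (push_cast; ring1)) (γ : ℂ) * hB + hZ
    exact (mul_eq_zero.mp h).resolve_left hc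

private lemma normSq_D (k E0 γ lam t : ℝ) :
    Complex.normSq (((E0 - k^2 + lam * t : ℝ) : ℂ) *
        (2 * Complex.I * (k : ℂ) - (k : ℂ)^2) - (γ : ℂ)^2)
      = ((lam * t + E0 - k^2) * k^2 + γ^2)^2 + 4 * k^2 * (lam * t + E0 - k^2)^2 := by
  have h : ((E0 - k^2 + lam * t : ℝ) : ℂ) *
        (2 * Complex.I * (k : ℂ) - (k : ℂ)^2) - (γ : ℂ)^2
      = ((-((lam * t + E0 - k^2) * k^2) - γ^2 : ℝ) : ℂ) +
        ((2 * (lam * t + E0 - k^2) * k : ℝ) : ℂ) * Complex.I := by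
    push_cast; ring
  rw [h, Complex.normSq_add_mul_I]; ring

private lemma normSq_rhs (k γ J : ℝ) :
    Complex.normSq (-(2 * Complex.I * (k : ℂ) * (γ : ℂ) * (J : ℂ)))
      = 4 * k^2 * γ^2 * J^2 := by
  have h : -(2 * Complex.I * (k : ℂ) * (γ : ℂ) * (J : ℂ))
      = ((0 : ℝ) : ℂ) + ((-(2 * k * γ * J) : ℝ) : ℂ) * Complex.I := by
    push_cast; ring
  rw [h, Complex.normSq_add_mul_I]; ring

/-- `(B, Z) ↦ |Z/J|²` is a bijection from the harmonic scattering
solutions onto the real solutions of the response equation. -/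
theorem response_map_bijection
    (k ω E0 γ lam J μ : ℝ) (hk : 0 < k) (hω : ω = k^2) (hγ : 0 < γ)
    (hJ : 0 < J) (hμ : μ = lam * J^2) :
    Set.BijOn (fun bz : ℂ × ℂ => ‖bz.2 / (J : ℂ)‖^2)
      (ScatteringSolutions k E0 γ lam J) (ResponseSolutions ω E0 γ μ) := by
  subst hω hμ
  have hk2 : (0:ℝ) < k^2 := by positivity
  have hJ2 : (J:ℝ)^2 ≠ 0 := by positivity
  have hc : (2 * Complex.I * (k : ℂ) - (k : ℂ)^2) ≠ 0 := by
    intro h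
    have him := congrArg Complex.im h
    simp [← Complex.ofReal_pow] at him
    exact hk.ne' him
  have hRHS : (-(2 * Complex.I * (k : ℂ) * (γ : ℂ) * (J : ℂ))) ≠ 0 := by
    simp [Complex.I_ne_zero, hk.ne', hγ.ne', hJ.ne']
  have hnorm : ∀ z : ℂ, ‖z / (J : ℂ)‖^2 = ‖z‖^2 / J^2 := by
    intro z
    rw [norm_div, div_pow, Complex.norm_real, Real.norm_eq_abs, abs_of_pos hJ]
  have hnsq : ∀ z : ℂ, Complex.normSq z = ‖z‖^2 := by
    intro z
    rw [Complex.normSq_eq_norm_sq]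
  refine ⟨?_, ?_, ?_⟩
  · -- MapsTo
    rintro ⟨B, Z⟩ hmem
    obtain ⟨hZ, hB⟩ := (mem_scatter_iff k E0 γ lam J hk (B, Z)).mp hmem
    have h2 := congrArg Complex.normSq hZ
    rw [Complex.normSq_mul, normSq_D, normSq_rhs, hnsq] at h2
    simp only [Prod.snd] at h2
    show ‖Z / (J : ℂ)‖^2 ∈ ResponseSolutions (k^2) E0 γ (lam * J^2)
    rw [ResponseSolutions, Set.mem_setOf_eq, resp_iff _ _ _ _ _ hk2, hnorm]
    have hx : lam * J^2 * (‖Z‖^2 / J^2) = lam * ‖Z‖^2 := by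
      field_simp
    rw [hx, div_mul_eq_mul_div, div_eq_iff hJ2]
    linear_combination h2
  · -- InjOn
    rintro ⟨B, Z⟩ hm ⟨B', Z'⟩ hm' heq
    obtain ⟨hZ, hB⟩ := (mem_scatter_iff k E0 γ lam J hk (B, Z)).mp hm
    obtain ⟨hZ', hB'⟩ := (mem_scatter_iff k E0 γ lam J hk (B', Z')).mp hm'
    simp only [Prod.fst, Prod.snd] at heq hZ hZ' hB hB'
    have ht : ‖Z‖^2 = ‖Z'‖^2 := by
      rw [hnorm, hnorm] at heq
      field_simp at heq
      rw [heq]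
    rw [ht] at hZ
    have hD_ne : (((E0 - k^2 + lam * ‖Z'‖^2 : ℝ) : ℂ) *
        (2 * Complex.I * (k : ℂ) - (k : ℂ)^2) - (γ : ℂ)^2) ≠ 0 := by
      intro h0
      rw [h0, mul_zero] at hZ'
      exact hRHS hZ'.symm
    have hZZ : Z = Z' := mul_right_cancel₀ hD_ne (hZ.trans hZ'.symm)
    have hBB : B = B' := by
      apply mul_left_cancel₀ hc
      rw [hB, hB', hZZ]
    exact Prod.ext hBB hZZ
  · -- SurjOn
    intro R hR
    rw [ResponseSolutions, Set.mem_setOf_eq, resp_iff _ _ _ _ _ hk2] at hR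
    set P : ℝ := ((lam * (R * J^2) + E0 - k^2) * k^2 + γ^2)^2 +
      4 * k^2 * (lam * (R * J^2) + E0 - k^2)^2 with hPdef
    have hRP : R * P = 4 * k^2 * γ^2 := by
      rw [hPdef]; linear_combination hR
    have hPnn : (0:ℝ) ≤ P := by positivity
    have hP_pos : (0:ℝ) < P := by
      rcases hPnn.lt_or_eq with h | h
      · exact h
      · exfalso
        rw [← h, mul_zero] at hRP
        have : (0:ℝ) < 4 * k^2 * γ^2 := by positivity
        linarith
    set D : ℂ := ((E0 - k^2 + lam * (R * J^2) : ℝ) : ℂ) *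
      (2 * Complex.I * (k : ℂ) - (k : ℂ)^2) - (γ : ℂ)^2 with hDdef
    have hDsq : Complex.normSq D = P := by
      rw [hDdef, normSq_D, hPdef]
    have hD_ne : D ≠ 0 := by
      intro h0
      rw [h0, Complex.normSq_zero] at hDsq
      exact hP_pos.ne hDsq
    set Z : ℂ := -(2 * Complex.I * (k : ℂ) * (γ : ℂ) * (J : ℂ)) / D with hZdef
    have hZt : ‖Z‖^2 = R * J^2 := by
      rw [← hnsq, hZdef, Complex.normSq_div, normSq_rhs, hDsq, div_eq_iff hP_pos.ne']
      linear_combination (-J^2) * hRP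
    set B : ℂ := (2 * Complex.I * (k : ℂ) * (J : ℂ) - (γ : ℂ) * Z) /
      (2 * Complex.I * (k : ℂ) - (k : ℂ)^2) with hBdef
    have hmem : (B, Z) ∈ ScatteringSolutions k E0 γ lam J := by
      rw [mem_scatter_iff k E0 γ lam J hk]
      constructor
      · show Z * _ = _
        rw [hZt, ← hDdef, hZdef]
        exact div_mul_cancel₀ _ hD_ne
      · show _ * B = _
        rw [hBdef, mul_comm]
        exact div_mul_cancel₀ _ hc
    refine ⟨(B, Z), hmem, ?_⟩
    simp only
    rw [hnorm, hZt, mul_div_assoc, div_self hJ2, mul_one]
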